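/- arXiv:2104.02861 — 2 statements merged into one kernel-verified Lean document; each statement's English description precedes it below -/
import Mathlib

section
/- Let A ∈ ℝ^{m×n}, let ω ∈ ℝ^m with ‖ω‖₂ ≤ δ, let x⋆ ∈ ℝⁿ with ‖x⋆‖₀ ≤ s, and let y = A x⋆ + ω. Fix a step size μ > 0 and an iterate x_t ∈ ℝⁿ such that Card(supp(x_t) \ supp(x⋆)) < s and ‖x_t − x⋆‖₂ ≤ Δ_t. If the continuation parameter is chosen as λ_t = (ξ_s · δ + ρ_{s,2s} · Δ_t / μ) / √s, then the proximal-gradient homotopy update x_{t+1} = argmin_x { λ_t μ ‖x‖₁ + ½‖x − y_t‖₂² }, where y_t = x_t − μ Aᵀ(A x_t − y), satisfies Card(supp(x_{t+1}) \ supp(x⋆)) < s. -/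
open MeasureTheory ProbabilityTheory

noncomputable section

/-- Euclidean dot product on `Fin n → ℝ`. -/
def dotp {n : ℕ} (x y : Fin n → ℝ) : ℝ := ∑ i, x i * y i

/-- Euclidean (ℓ₂) norm. -/
def l2norm {n : ℕ} (x : Fin n → ℝ) : ℝ := Real.sqrt (∑ i, x i ^ 2)

/-- ℓ₁ norm. -/
def l1norm {n : ℕ} (x : Fin n → ℝ) : ℝ := ∑ i, |x i|

/-- Support of a vector as a finite set. -/
def suppF {n : ℕ} (x : Fin n → ℝ) : Finset (Fin n) :=
  Finset.univ.filter (fun i => x i ≠ 0)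

/-- ℓ₀ "norm": number of nonzero entries. -/
def l0 {n : ℕ} (x : Fin n → ℝ) : ℕ := (suppF x).card

/-- The Euclidean unit sphere `S^{n-1}`. -/
def unitSphere (n : ℕ) : Set (Fin n → ℝ) := {x | l2norm x = 1}

/-- The set of `s`-sparse vectors. -/
def sparseSet (n s : ℕ) : Set (Fin n → ℝ) := {x | l0 x ≤ s}

/-- Matrix-vector product, viewing `A : Fin m → Fin n → ℝ` as the rows of a matrix. -/
def mvec {m n : ℕ} (A : Fin m → Fin n → ℝ) (x : Fin n → ℝ) : Fin m → ℝ := fun i => dotp (A i) x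

/-- Transposed matrix-vector product `Aᵀ y`. -/
def tmvec {m n : ℕ} (A : Fin m → Fin n → ℝ) (y : Fin m → ℝ) : Fin n → ℝ := fun j => ∑ i, A i j * y i

/-- Restricted singular value `ρ(P,Q) = sup_{v∈P,u∈Q} ⟨v, (I - μ AᵀA) u⟩`. -/
def rsRho {m n : ℕ} (A : Fin m → Fin n → ℝ) (μ : ℝ) (P Q : Set (Fin n → ℝ)) : ℝ :=
  sSup {t | ∃ v ∈ P, ∃ u ∈ Q, t = dotp v (u - μ • tmvec A (mvec A u))}

/-- Restricted singular value `ξ(P) = sup_{v∈P} ⟨v, Aᵀ (w/‖w‖₂)⟩`. -/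
def rsXi {m n : ℕ} (A : Fin m → Fin n → ℝ) (w : Fin m → ℝ) (P : Set (Fin n → ℝ)) : ℝ :=
  sSup {t | ∃ v ∈ P, t = dotp v (tmvec A ((l2norm w)⁻¹ • w))}

/-- Gaussian complexity `γ(C) = E sup_{x ∈ C} |⟨g, x⟩|`, `g ∼ N(0, I_n)`. -/
def gcomp {n : ℕ} (C : Set (Fin n → ℝ)) : ℝ :=
  ∫ g, sSup ((fun x => |dotp g x|) '' C) ∂(Measure.pi fun _ : Fin n => gaussianReal 0 1)

/-- Sub-Gaussian (ψ₂) norm of a real random variable. -/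
def psi2 {Ω : Type*} [MeasureSpace Ω] (Z : Ω → ℝ) : ℝ :=
  sInf {t | 0 < t ∧ ∫ ω, Real.exp (Z ω ^ 2 / t ^ 2) ≤ 2}

/-- Sub-Gaussian (ψ₂) norm of a random vector. -/
def vpsi2 {Ω : Type*} [MeasureSpace Ω] {n : ℕ} (X : Ω → Fin n → ℝ) : ℝ :=
  sSup {t | ∃ u ∈ unitSphere n, t = psi2 (fun ω => dotp (X ω) u)}

/-- A random vector is centered and isotropic. -/
def centIso {Ω : Type*} [MeasureSpace Ω] {n : ℕ} (X : Ω → Fin n → ℝ) : Prop :=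
  (∀ j, ∫ ω, X ω j = 0) ∧ ∀ j k, ∫ ω, X ω j * X ω k = if j = k then (1 : ℝ) else 0

end


noncomputable section

lemma l2norm_nonneg {n : ℕ} (x : Fin n → ℝ) : 0 ≤ l2norm x := Real.sqrt_nonneg _

lemma l2norm_sq {n : ℕ} (x : Fin n → ℝ) : l2norm x ^ 2 = ∑ i, x i ^ 2 :=
  Real.sq_sqrt (Finset.sum_nonneg fun i _ => sq_nonneg _)

lemma abs_le_l2norm {n : ℕ} (x : Fin n → ℝ) (i : Fin n) : |x i| ≤ l2norm x := by
  rw [l2norm, ← Real.sqrt_sq_eq_abs]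
  exact Real.sqrt_le_sqrt (Finset.single_le_sum (fun j _ => sq_nonneg (x j)) (Finset.mem_univ i))

lemma l2norm_smul {n : ℕ} (c : ℝ) (x : Fin n → ℝ) :
    l2norm (c • x) = |c| * l2norm x := by
  simp only [l2norm, Pi.smul_apply, smul_eq_mul, mul_pow, ← Finset.mul_sum]
  rw [Real.sqrt_mul (sq_nonneg c), Real.sqrt_sq_eq_abs]

lemma eq_zero_of_l2norm_eq_zero {n : ℕ} {x : Fin n → ℝ} (h : l2norm x = 0) (i : Fin n) :
    x i = 0 := by
  have h2 : ∑ j, x j ^ 2 = 0 := by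
    have := l2norm_sq x; rw [h] at this; simpa using this.symm
  have := (Finset.sum_eq_zero_iff_of_nonneg (fun j _ => sq_nonneg (x j))).1 h2 i (Finset.mem_univ i)
  exact pow_eq_zero_iff (two_ne_zero) |>.1 this

lemma dotp_le_of_abs_le {n : ℕ} {v z b : Fin n → ℝ}
    (hv : ∀ j, |v j| ≤ 1) (hz : ∀ j, |z j| ≤ b j) : dotp v z ≤ ∑ j, b j := by
  refine le_trans (Finset.sum_le_sum fun j _ => le_abs_self (v j * z j)) ?_
  refine Finset.sum_le_sum fun j _ => ?_
  rw [abs_mul]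
  calc |v j| * |z j| ≤ 1 * b j :=
        mul_le_mul (hv j) (hz j) (abs_nonneg _) one_pos.le
    _ = b j := one_mul _

lemma T_smul {m n : ℕ} (A : Fin m → Fin n → ℝ) (c : ℝ) (u : Fin n → ℝ) :
    tmvec A (mvec A (c • u)) = c • tmvec A (mvec A u) := by
  funext j
  simp only [tmvec, mvec, dotp, Pi.smul_apply, smul_eq_mul, Finset.mul_sum]
  exact Finset.sum_congr rfl fun i _ => Finset.sum_congr rfl fun k _ => by ring

lemma dotp_smul_right {n : ℕ} (c : ℝ) (v z : Fin n → ℝ) :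
    dotp v (c • z) = c * dotp v z := by
  simp only [dotp, Pi.smul_apply, smul_eq_mul, Finset.mul_sum]
  exact Finset.sum_congr rfl fun i _ => by ring

lemma neg_mem_PS {n k : ℕ} {v : Fin n → ℝ} (h : v ∈ sparseSet n k ∩ unitSphere n) :
    -v ∈ sparseSet n k ∩ unitSphere n := by
  obtain ⟨h0, h1⟩ := h
  constructor
  · simpa [sparseSet, l0, suppF] using h0
  · simpa [unitSphere, l2norm, neg_sq] using h1

lemma dotp_neg_left {n : ℕ} (v z : Fin n → ℝ) : dotp (-v) z = -dotp v z := by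
  simp [dotp, Finset.sum_neg_distrib]

end

noncomputable section

lemma abs_unit_le_one {n : ℕ} {v : Fin n → ℝ} (h : v ∈ unitSphere n) (j : Fin n) : |v j| ≤ 1 := by
  have := abs_le_l2norm v j
  rwa [h] at this

lemma abs_tmvec_le {m n : ℕ} (A : Fin m → Fin n → ℝ) {u : Fin m → ℝ}
    (hu : ∀ i, |u i| ≤ 1) (j : Fin n) : |tmvec A u j| ≤ ∑ i, |A i j| := by
  refine le_trans (Finset.abs_sum_le_sum_abs _ _) (Finset.sum_le_sum fun i _ => ?_)
  rw [abs_mul]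
  exact mul_le_of_le_one_right (abs_nonneg _) (hu i)

lemma abs_mvec_le {m n : ℕ} (A : Fin m → Fin n → ℝ) {u : Fin n → ℝ}
    (hu : ∀ k, |u k| ≤ 1) (i : Fin m) : |mvec A u i| ≤ ∑ k, |A i k| := by
  show |∑ k, A i k * u k| ≤ _
  refine le_trans (Finset.abs_sum_le_sum_abs _ _) (Finset.sum_le_sum fun k _ => ?_)
  rw [abs_mul]
  exact mul_le_of_le_one_right (abs_nonneg _) (hu k)

lemma bddAbove_rhoSet {m n : ℕ} (A : Fin m → Fin n → ℝ) (μ : ℝ) (P Q : Set (Fin n → ℝ))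
    (hP : P ⊆ unitSphere n) (hQ : Q ⊆ unitSphere n) :
    BddAbove {t | ∃ v ∈ P, ∃ u ∈ Q, t = dotp v (u - μ • tmvec A (mvec A u))} := by
  refine ⟨∑ j : Fin n, (1 + |μ| * ((∑ i, |A i j| * ∑ k, |A i k|))), ?_⟩
  rintro t ⟨v, hv, u, hu, rfl⟩
  refine dotp_le_of_abs_le (abs_unit_le_one (hP hv)) fun j => ?_
  have h1 : |u j| ≤ 1 := abs_unit_le_one (hQ hu) j
  have h2 : |tmvec A (mvec A u) j| ≤ ∑ i, |A i j| * ∑ k, |A i k| := by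
    refine le_trans (Finset.abs_sum_le_sum_abs _ _) (Finset.sum_le_sum fun i _ => ?_)
    rw [abs_mul]
    exact mul_le_mul_of_nonneg_left (abs_mvec_le A (abs_unit_le_one (hQ hu)) i) (abs_nonneg _)
  calc |(u - μ • tmvec A (mvec A u)) j| = |u j - μ * tmvec A (mvec A u) j| := rfl
    _ ≤ |u j| + |μ * tmvec A (mvec A u) j| := abs_sub _ _
    _ ≤ 1 + |μ| * (∑ i, |A i j| * ∑ k, |A i k|) := by
        rw [abs_mul]
        exact add_le_add h1 (mul_le_mul_of_nonneg_left h2 (abs_nonneg _))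

lemma abs_normalized_le_one {m : ℕ} (w : Fin m → ℝ) (i : Fin m) :
    |((l2norm w)⁻¹ • w) i| ≤ 1 := by
  by_cases h : l2norm w = 0
  · simp [h, eq_zero_of_l2norm_eq_zero h i]
  · have hpos : 0 < l2norm w := lt_of_le_of_ne (l2norm_nonneg w) (Ne.symm h)
    have : |((l2norm w)⁻¹ • w) i| = (l2norm w)⁻¹ * |w i| := by
      simp [abs_mul, abs_of_pos hpos, abs_of_nonneg (inv_nonneg.2 hpos.le)]
    rw [this, inv_mul_le_iff₀ hpos, mul_one]
    exact abs_le_l2norm w i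

lemma bddAbove_xiSet {m n : ℕ} (A : Fin m → Fin n → ℝ) (w : Fin m → ℝ) (P : Set (Fin n → ℝ))
    (hP : P ⊆ unitSphere n) :
    BddAbove {t | ∃ v ∈ P, t = dotp v (tmvec A ((l2norm w)⁻¹ • w))} := by
  refine ⟨∑ j : Fin n, ∑ i, |A i j|, ?_⟩
  rintro t ⟨v, hv, rfl⟩
  exact dotp_le_of_abs_le (abs_unit_le_one (hP hv))
    (abs_tmvec_le A (abs_normalized_le_one w))

end

noncomputable section

lemma dotp_add_right {n : ℕ} (v a b : Fin n → ℝ) : dotp v (a + b) = dotp v a + dotp v b := by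
  simp [dotp, mul_add, Finset.sum_add_distrib]

lemma dotp_sub_right {n : ℕ} (v a b : Fin n → ℝ) : dotp v (a - b) = dotp v a - dotp v b := by
  simp [dotp, mul_sub, Finset.sum_sub_distrib]

lemma yt_decomp {m n : ℕ} (A : Fin m → Fin n → ℝ) (w : Fin m → ℝ) (xstar xt : Fin n → ℝ)
    (μ : ℝ) :
    xt - μ • tmvec A (mvec A xt - (mvec A xstar + w)) =
      xstar + ((xt - xstar) - μ • tmvec A (mvec A (xt - xstar))) + μ • tmvec A w := by
  funext j
  simp only [Pi.add_apply, Pi.sub_apply, Pi.smul_apply, smul_eq_mul, tmvec, mvec, dotp,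
    mul_sub, sub_mul, mul_add, add_mul, Finset.sum_sub_distrib, Finset.sum_add_distrib,
    Finset.mul_sum]
  ring

end

lemma tmvec_smul {m n : ℕ} (A : Fin m → Fin n → ℝ) (c : ℝ) (w : Fin m → ℝ) :
    tmvec A (c • w) = c • tmvec A w := by
  funext j
  simp only [tmvec, Pi.smul_apply, smul_eq_mul, Finset.mul_sum]
  exact Finset.sum_congr rfl fun i _ => by ring

/-- Implicit constraint induced by `λ_t`, sparse case.
If `y = A x⋆ + w` with `‖x⋆‖₀ ≤ s`, `‖w‖₂ ≤ δ`, the current iterate satisfies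
`Card(supp(x_t) \ supp(x⋆)) < s` and `‖x_t - x⋆‖₂ ≤ Δ_t`, and the continuation parameter is
`λ_t = (ξ_s δ + ρ_{s,2s} Δ_t/μ)/√s`, then the proximal-gradient homotopy update
`x_{t+1} = argmin_x { λ_t μ ‖x‖₁ + ½ ‖x - (x_t - μ Aᵀ(A x_t - y))‖₂² }` satisfies
`Card(supp(x_{t+1}) \ supp(x⋆)) < s`. -/
theorem stmt0 {m n : ℕ} (A : Fin m → Fin n → ℝ) (w : Fin m → ℝ) (δ : ℝ)
    (xstar : Fin n → ℝ) (s : ℕ) (μ Δt lamt : ℝ) (xt xnext : Fin n → ℝ)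
    (y : Fin m → ℝ) (hy : y = mvec A xstar + w)
    (hxs : l0 xstar ≤ s) (hw : l2norm w ≤ δ) (hμ : 0 < μ)
    (hsupp : (suppF xt \ suppF xstar).card < s)
    (hΔ : l2norm (xt - xstar) ≤ Δt)
    (hlam : lamt = (rsXi A w (sparseSet n s ∩ unitSphere n) * δ +
        rsRho A μ (sparseSet n s ∩ unitSphere n) (sparseSet n (2 * s) ∩ unitSphere n) * Δt / μ)
        / Real.sqrt s)
    (hmin : ∀ z : Fin n → ℝ,
        lamt * μ * l1norm xnext + (1 / 2) * l2norm (xnext - (xt - μ • tmvec A (mvec A xt - y))) ^ 2 ≤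
        lamt * μ * l1norm z + (1 / 2) * l2norm (z - (xt - μ • tmvec A (mvec A xt - y))) ^ 2) :
    (suppF xnext \ suppF xstar).card < s := by
  classical
  set P := sparseSet n s ∩ unitSphere n with hP
  set Q := sparseSet n (2 * s) ∩ unitSphere n with hQ
  set ξ := rsXi A w P with hξ
  set ρ := rsRho A μ P Q with hρ
  by_contra hcon
  push_neg at hcon
  have hs0 : 0 < s := lt_of_le_of_lt (Nat.zero_le _) hsupp
  have hsr : (0:ℝ) < Real.sqrt s := Real.sqrt_pos.2 (by exact_mod_cast hs0)
  obtain ⟨S, hSsub, hScard⟩ := Finset.exists_subset_card_eq hcon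
  set yt := xt - μ • tmvec A (mvec A xt - y) with hyt
  -- per-coordinate optimality
  have hopt : ∀ i : Fin n, lamt * μ * |xnext i| + (xnext i) ^ 2 / 2 ≤ xnext i * yt i := by
    intro i
    have h := hmin (Function.update xnext i 0)
    have e1 : l1norm xnext = |xnext i| + ∑ j ∈ Finset.univ.erase i, |xnext j| :=
      (Finset.add_sum_erase _ _ (Finset.mem_univ i)).symm
    have e2 : l1norm (Function.update xnext i 0) = ∑ j ∈ Finset.univ.erase i, |xnext j| := by
      rw [l1norm, ← Finset.add_sum_erase _ _ (Finset.mem_univ i)]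
      simp only [Function.update_self, abs_zero, zero_add]
      exact Finset.sum_congr rfl fun j hj => by
        rw [Function.update_of_ne (Finset.ne_of_mem_erase hj)]
    have e3 : l2norm (xnext - yt) ^ 2
        = (xnext i - yt i) ^ 2 + ∑ j ∈ Finset.univ.erase i, (xnext j - yt j) ^ 2 := by
      rw [l2norm_sq]
      simp only [Pi.sub_apply]
      exact (Finset.add_sum_erase _ (fun j => (xnext j - yt j) ^ 2) (Finset.mem_univ i)).symm
    have e4 : l2norm (Function.update xnext i 0 - yt) ^ 2
        = (0 - yt i) ^ 2 + ∑ j ∈ Finset.univ.erase i, (xnext j - yt j) ^ 2 := by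
      rw [l2norm_sq]
      simp only [Pi.sub_apply]
      rw [← Finset.add_sum_erase _ (fun j => (Function.update xnext i 0 j - yt j) ^ 2)
        (Finset.mem_univ i)]
      simp only [Function.update_self]
      congr 1
      exact Finset.sum_congr rfl fun j hj => by
        rw [Function.update_of_ne (Finset.ne_of_mem_erase hj)]
    rw [e1, e2, e3, e4] at h
    nlinarith [h]
  -- sign vector
  set σ : Fin n → ℝ := fun i => if 0 < xnext i then 1 else -1 with hσ
  have hσsq : ∀ i, σ i ^ 2 = 1 := fun i => by by_cases h : 0 < xnext i <;> simp [hσ, h]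
  have hSne : ∀ i ∈ S, xnext i ≠ 0 := by
    intro i hi
    have := hSsub hi
    rw [Finset.mem_sdiff, suppF, Finset.mem_filter] at this
    exact this.1.2
  have hsig : ∀ i ∈ S, lamt * μ < σ i * yt i := by
    intro i hi
    have hne := hSne i hi
    have h1 := hopt i
    rcases lt_trichotomy (xnext i) 0 with hb | hb | hb
    · have : σ i = -1 := by simp [hσ, not_lt_of_gt hb, asymm hb]
      rw [this]
      rw [abs_of_neg hb] at h1
      nlinarith
    · exact absurd hb hne
    · have : σ i = 1 := by simp [hσ, hb]
      rw [this]
      rw [abs_of_pos hb] at h1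
      nlinarith
  -- the dual vector v
  set v : Fin n → ℝ := fun j => if j ∈ S then σ j / Real.sqrt s else 0 with hv
  have hsc : (s:ℝ) ≠ 0 := Nat.cast_ne_zero.2 hs0.ne'
  have hvsum : ∑ j, v j ^ 2 = 1 := by
    have h1 : ∀ j, v j ^ 2 = if j ∈ S then 1 / (s:ℝ) else 0 := by
      intro j
      by_cases h : j ∈ S
      · simp only [hv, h, if_true, div_pow, hσsq j, Real.sq_sqrt (Nat.cast_nonneg s)]
      · simp [hv, h]
    rw [Finset.sum_congr rfl fun j _ => h1 j, Finset.sum_ite_mem, Finset.univ_inter,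
      Finset.sum_const, hScard, nsmul_eq_mul]
    field_simp
  have hvsphere : v ∈ unitSphere n := by
    show l2norm v = 1
    rw [l2norm, hvsum, Real.sqrt_one]
  have hvsupp : suppF v ⊆ S := by
    intro j hj
    rw [suppF, Finset.mem_filter] at hj
    by_contra hns
    exact hj.2 (by simp [hv, hns])
  have hvP : v ∈ P := by
    refine ⟨?_, hvsphere⟩
    show l0 v ≤ s
    rw [← hScard]
    exact Finset.card_le_card hvsupp
  have hvQ : v ∈ Q := by
    refine ⟨?_, hvsphere⟩
    show l0 v ≤ 2 * s
    have : l0 v ≤ s := by rw [← hScard]; exact Finset.card_le_card hvsupp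
    omega
  -- lower bound on dotp v yt
  have hSnonempty : S.Nonempty := Finset.card_pos.1 (by rw [hScard]; exact hs0)
  have hlow : Real.sqrt s * (lamt * μ) < dotp v yt := by
    have e1 : dotp v yt = ∑ j ∈ S, σ j * yt j / Real.sqrt s := by
      rw [dotp]
      rw [Finset.sum_congr rfl (fun j (_ : j ∈ Finset.univ) => by
        show v j * yt j = if j ∈ S then σ j * yt j / Real.sqrt s else 0
        by_cases h : j ∈ S <;> simp [hv, h, div_mul_eq_mul_div])]
      rw [Finset.sum_ite_mem, Finset.univ_inter]
    rw [e1]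
    have e2 : Real.sqrt s * (lamt * μ) = ∑ j ∈ S, lamt * μ / Real.sqrt s := by
      rw [Finset.sum_const, hScard, nsmul_eq_mul]
      have hss : (s:ℝ) = Real.sqrt s * Real.sqrt s := (Real.mul_self_sqrt (Nat.cast_nonneg s)).symm
      field_simp
      linear_combination (-lamt) * hss
    rw [e2]
    refine Finset.sum_lt_sum_of_nonempty hSnonempty fun j hj => ?_
    exact div_lt_div_of_pos_right (hsig j hj) hsr
  -- nonnegativity of ρ and ξ
  have hbddρ : BddAbove {t | ∃ v ∈ P, ∃ u ∈ Q, t = dotp v (u - μ • tmvec A (mvec A u))} :=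
    bddAbove_rhoSet A μ P Q (fun x hx => hx.2) (fun x hx => hx.2)
  have hbddξ : BddAbove {t | ∃ v ∈ P, t = dotp v (tmvec A ((l2norm w)⁻¹ • w))} :=
    bddAbove_xiSet A w P (fun x hx => hx.2)
  have hρdef : ρ = sSup {t | ∃ v ∈ P, ∃ u ∈ Q, t = dotp v (u - μ • tmvec A (mvec A u))} := rfl
  have hξdef : ξ = sSup {t | ∃ v ∈ P, t = dotp v (tmvec A ((l2norm w)⁻¹ • w))} := rfl
  have hρ0 : 0 ≤ ρ := by
    have hm1 : dotp v (v - μ • tmvec A (mvec A v))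
        ∈ {t | ∃ v' ∈ P, ∃ u ∈ Q, t = dotp v' (u - μ • tmvec A (mvec A u))} :=
      ⟨v, hvP, v, hvQ, rfl⟩
    have hm2 : -dotp v (v - μ • tmvec A (mvec A v))
        ∈ {t | ∃ v' ∈ P, ∃ u ∈ Q, t = dotp v' (u - μ • tmvec A (mvec A u))} :=
      ⟨-v, neg_mem_PS hvP, v, hvQ, (dotp_neg_left _ _).symm⟩
    have h1 := le_csSup hbddρ hm1
    have h2 := le_csSup hbddρ hm2
    rw [← hρdef] at h1 h2
    linarith
  have hξ0 : 0 ≤ ξ := by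
    have hm1 : dotp v (tmvec A ((l2norm w)⁻¹ • w))
        ∈ {t | ∃ v' ∈ P, t = dotp v' (tmvec A ((l2norm w)⁻¹ • w))} := ⟨v, hvP, rfl⟩
    have hm2 : -dotp v (tmvec A ((l2norm w)⁻¹ • w))
        ∈ {t | ∃ v' ∈ P, t = dotp v' (tmvec A ((l2norm w)⁻¹ • w))} :=
      ⟨-v, neg_mem_PS hvP, (dotp_neg_left _ _).symm⟩
    have h1 := le_csSup hbddξ hm1
    have h2 := le_csSup hbddξ hm2
    rw [← hξdef] at h1 h2
    linarith
  have hδ0 : 0 ≤ δ := le_trans (l2norm_nonneg w) hw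
  have hΔ0 : 0 ≤ Δt := le_trans (l2norm_nonneg _) hΔ
  -- upper bound on dotp v yt
  have hupp : dotp v yt ≤ ρ * Δt + μ * (ξ * δ) := by
    set u : Fin n → ℝ := xt - xstar with hu
    have hdec : yt = xstar + (u - μ • tmvec A (mvec A u)) + μ • tmvec A w := by
      rw [hyt, hy]; exact yt_decomp A w xstar xt μ
    have hsplit : dotp v yt = dotp v xstar + dotp v (u - μ • tmvec A (mvec A u))
        + μ * dotp v (tmvec A w) := by
      rw [hdec, dotp_add_right, dotp_add_right, dotp_smul_right]
    have hvx : dotp v xstar = 0 := by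
      show (∑ j, v j * xstar j) = 0
      apply Finset.sum_eq_zero
      intro j _
      by_cases h : j ∈ S
      · have hj := hSsub h
        rw [Finset.mem_sdiff] at hj
        have hx0 : xstar j = 0 := by
          by_contra hne
          exact hj.2 (by rw [suppF, Finset.mem_filter]; exact ⟨Finset.mem_univ j, hne⟩)
        rw [hx0, mul_zero]
      · simp [hv, h]
    have hu2s : l0 u ≤ 2 * s := by
      have hsub : suppF u ⊆ suppF xt ∪ suppF xstar := by
        intro j hj
        rw [suppF, Finset.mem_filter] at hj
        rcases eq_or_ne (xt j) 0 with h1 | h1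
        · refine Finset.mem_union_right _ ?_
          rw [suppF, Finset.mem_filter]
          refine ⟨Finset.mem_univ j, fun h2 => ?_⟩
          apply hj.2
          show xt j - xstar j = 0
          rw [h1, h2, sub_zero]
        · exact Finset.mem_union_left _
            (by rw [suppF, Finset.mem_filter]; exact ⟨Finset.mem_univ j, h1⟩)
      have hcard : (suppF xt ∪ suppF xstar).card ≤ 2 * s := by
        have h3 : suppF xt ∪ suppF xstar = (suppF xt \ suppF xstar) ∪ suppF xstar :=
          (Finset.sdiff_union_self_eq_union).symm
        rw [h3]
        have h4 := Finset.card_union_le (suppF xt \ suppF xstar) (suppF xstar)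
        have hxs' : (suppF xstar).card ≤ s := hxs
        omega
      exact le_trans (Finset.card_le_card hsub) hcard
    have hterm2 : dotp v (u - μ • tmvec A (mvec A u)) ≤ ρ * Δt := by
      by_cases hz : l2norm u = 0
      · have hu0 : u = 0 := funext (eq_zero_of_l2norm_eq_zero hz)
        rw [hu0]
        have hz1 : (0 : Fin n → ℝ) - μ • tmvec A (mvec A 0) = 0 := by
          funext j; simp [tmvec, mvec, dotp]
        rw [hz1]
        have hz2 : dotp v (0 : Fin n → ℝ) = 0 := by simp [dotp]
        rw [hz2]
        exact mul_nonneg hρ0 hΔ0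
      · have hc : 0 < l2norm u := lt_of_le_of_ne (l2norm_nonneg u) (Ne.symm hz)
        set c := l2norm u with hcdef
        have hQmem : c⁻¹ • u ∈ Q := by
          constructor
          · show l0 (c⁻¹ • u) ≤ 2 * s
            refine le_trans (Finset.card_le_card ?_) hu2s
            intro j hj
            rw [suppF, Finset.mem_filter] at hj ⊢
            refine ⟨Finset.mem_univ j, fun h2 => hj.2 ?_⟩
            show c⁻¹ * u j = 0
            rw [h2, mul_zero]
          · show l2norm (c⁻¹ • u) = 1
            rw [l2norm_smul, abs_of_pos (inv_pos.2 hc), inv_mul_cancel₀ hc.ne']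
        have hmem : dotp v (c⁻¹ • u - μ • tmvec A (mvec A (c⁻¹ • u))) ≤ ρ := by
          rw [hρdef]
          exact le_csSup hbddρ ⟨v, hvP, c⁻¹ • u, hQmem, rfl⟩
        have heq2 : dotp v (u - μ • tmvec A (mvec A u))
            = c * dotp v (c⁻¹ • u - μ • tmvec A (mvec A (c⁻¹ • u))) := by
          rw [T_smul, smul_comm μ c⁻¹, ← smul_sub, dotp_smul_right]
          field_simp
        rw [heq2]
        calc c * dotp v (c⁻¹ • u - μ • tmvec A (mvec A (c⁻¹ • u))) ≤ c * ρ :=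
              mul_le_mul_of_nonneg_left hmem hc.le
          _ ≤ Δt * ρ := mul_le_mul_of_nonneg_right hΔ hρ0
          _ = ρ * Δt := mul_comm _ _
    have hterm3 : dotp v (tmvec A w) ≤ ξ * δ := by
      by_cases hwz : l2norm w = 0
      · have hw0 : tmvec A w = 0 := by
          funext j
          have hwi := eq_zero_of_l2norm_eq_zero hwz
          simp [tmvec, hwi]
        rw [hw0]
        have hz2 : dotp v (0 : Fin n → ℝ) = 0 := by simp [dotp]
        rw [hz2]
        exact mul_nonneg hξ0 hδ0
      · have hcw : 0 < l2norm w := lt_of_le_of_ne (l2norm_nonneg w) (Ne.symm hwz)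
        have hmem : dotp v (tmvec A ((l2norm w)⁻¹ • w)) ≤ ξ := by
          rw [hξdef]; exact le_csSup hbddξ ⟨v, hvP, rfl⟩
        have heq3 : dotp v (tmvec A w) = l2norm w * dotp v (tmvec A ((l2norm w)⁻¹ • w)) := by
          rw [tmvec_smul, dotp_smul_right]
          field_simp
        rw [heq3]
        calc l2norm w * dotp v (tmvec A ((l2norm w)⁻¹ • w)) ≤ l2norm w * ξ :=
              mul_le_mul_of_nonneg_left hmem hcw.le
          _ ≤ δ * ξ := mul_le_mul_of_nonneg_right hw hξ0
          _ = ξ * δ := mul_comm _ _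
    rw [hsplit, hvx, zero_add]
    exact add_le_add hterm2 (mul_le_mul_of_nonneg_left hterm3 hμ.le)
  -- contradiction
  have heq : Real.sqrt s * (lamt * μ) = ρ * Δt + μ * (ξ * δ) := by
    rw [hlam]
    field_simp
    ring
  linarith
end

section
/- Let X, X⋆ ∈ ℝ^{d×d} with rank(X) ≥ 2r, rank(X⋆) ≤ r, and r ≥ 1. Then there exists a matrix Z̄ ∈ ℝ^{d×d} with the following properties: rank(Z̄) = r, ‖Z̄‖_F = √r, ⟨Z̄, X⋆⟩ = 0, ⟨Z̄, X⟩ > 0, and ⟨Z̄, Z⟩ = r for every subgradient Z ∈ ∂‖X‖_*. -/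
noncomputable section

/-- Frobenius (trace) inner product. -/
def fip {d : ℕ} (X Y : Matrix (Fin d) (Fin d) ℝ) : ℝ := ∑ i, ∑ j, X i j * Y i j

/-- Frobenius norm. -/
def frob {d : ℕ} (X : Matrix (Fin d) (Fin d) ℝ) : ℝ := Real.sqrt (∑ i, ∑ j, X i j ^ 2)

/-- Nuclear norm: sum of the singular values (square roots of eigenvalues of `XᴴX`). -/
def nucNorm {d : ℕ} (X : Matrix (Fin d) (Fin d) ℝ) : ℝ :=
  ∑ i, Real.sqrt ((Matrix.isHermitian_conjTranspose_mul_self X).eigenvalues i)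

/-- The subdifferential of the nuclear norm at `X` (as the subdifferential of a convex
function with respect to the Frobenius inner product). -/
def nucSubdiff {d : ℕ} (X : Matrix (Fin d) (Fin d) ℝ) : Set (Matrix (Fin d) (Fin d) ℝ) :=
  {Z | ∀ Y, nucNorm X + fip Z (Y - X) ≤ nucNorm Y}

end

noncomputable section StmtNineAux

open Matrix
open scoped MatrixOrder

lemma fip_eq_trace {d : ℕ} (A B : Matrix (Fin d) (Fin d) ℝ) : fip A B = (Aᴴ * B).trace := by
  simp only [fip, Matrix.trace, Matrix.diag, Matrix.mul_apply, Matrix.conjTranspose_apply,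
    star_trivial]
  rw [Finset.sum_comm]

lemma fip_comm {d : ℕ} (A B : Matrix (Fin d) (Fin d) ℝ) : fip A B = fip B A := by
  simp only [fip, mul_comm]

lemma fip_smul {d : ℕ} (A B : Matrix (Fin d) (Fin d) ℝ) (t : ℝ) :
    fip A (t • B) = t * fip A B := by
  simp only [fip, Matrix.smul_apply, smul_eq_mul, Finset.mul_sum]
  exact Finset.sum_congr rfl fun i _ => Finset.sum_congr rfl fun j _ => by ring

lemma trace_sqrt {d : ℕ} {A : Matrix (Fin d) (Fin d) ℝ} (hA : A.PosSemidef) :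
    (CFC.sqrt A).trace = ∑ i, Real.sqrt (hA.1.eigenvalues i) := by
  rw [CFC.sqrt_eq_cfc, cfc_nnreal_eq_real _ A, hA.1.cfc_eq, Matrix.IsHermitian.cfc,
    Unitary.conjStarAlgAut_apply, Matrix.trace_mul_cycle]
  have h1 : (star (hA.1.eigenvectorUnitary : Matrix (Fin d) (Fin d) ℝ)) *
      (hA.1.eigenvectorUnitary : Matrix (Fin d) (Fin d) ℝ) = 1 :=
    Unitary.coe_star_mul_self _
  rw [h1, Matrix.one_mul, Matrix.trace_diagonal]
  simp
  exact Finset.sum_congr rfl fun i _ => by rw [max_eq_left (hA.eigenvalues_nonneg i)]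

lemma nucNorm_eq_trace_of_sq {d : ℕ} (M R : Matrix (Fin d) (Fin d) ℝ)
    (hR : R.PosSemidef) (hsq : R ^ 2 = Mᴴ * M) : nucNorm M = R.trace := by
  have hP : (Mᴴ * M).PosSemidef := Matrix.posSemidef_conjTranspose_mul_self M
  have : R = CFC.sqrt (Mᴴ * M) :=
    ((CFC.sqrt_eq_iff _ _ hP.nonneg hR.nonneg).mpr (by rw [← pow_two]; exact hsq)).symm
  rw [this, trace_sqrt hP]
  rfl

lemma psd_smul {n : ℕ} {A : Matrix (Fin n) (Fin n) ℝ} (hA : A.PosSemidef) {c : ℝ}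
    (hc : 0 ≤ c) : (c • A).PosSemidef := by
  exact hA.smul hc

lemma key {d m : ℕ} (X : Matrix (Fin d) (Fin d) ℝ)
    (U V : Matrix (Fin d) (Fin m) ℝ) (σ : Fin m → ℝ) (Pr : Matrix (Fin m) (Fin m) ℝ)
    (hσ : ∀ i, 0 ≤ σ i)
    (hV : Vᴴ * V = 1) (hU : Uᴴ * U = 1)
    (hXV : X * V = U * diagonal σ) (hXU : Xᴴ * U = V * diagonal σ)
    (hPs : Prᴴ = Pr) (hPr2 : Pr * Pr = Pr)
    (t : ℝ) (hPSD : (diagonal σ + t • Pr).PosSemidef) :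
    nucNorm (X + t • (U * Pr * Vᴴ)) = nucNorm X + t * Pr.trace := by
  set S : Matrix (Fin m) (Fin m) ℝ := diagonal σ with hS
  set Z : Matrix (Fin d) (Fin d) ℝ := U * Pr * Vᴴ with hZdef
  have hSh : Sᴴ = S := by
    simp [hS, Matrix.diagonal_conjTranspose]
  have hUX : Uᴴ * X = S * Vᴴ := by
    have := congrArg conjTranspose hXU
    simpa only [conjTranspose_mul, conjTranspose_conjTranspose, hSh] using this
  -- rule forms
  have hXU' : ∀ {k : ℕ} (W : Matrix (Fin m) (Fin k) ℝ), Xᴴ * (U * W) = V * (S * W) := by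
    intro k W; rw [← Matrix.mul_assoc, hXU, Matrix.mul_assoc]
  have hU' : ∀ {k : ℕ} (W : Matrix (Fin m) (Fin k) ℝ), Uᴴ * (U * W) = W := by
    intro k W; rw [← Matrix.mul_assoc, hU, Matrix.one_mul]
  have hV' : ∀ {k : ℕ} (W : Matrix (Fin m) (Fin k) ℝ), Vᴴ * (V * W) = W := by
    intro k W; rw [← Matrix.mul_assoc, hV, Matrix.one_mul]
  have hPr2' : ∀ {k : ℕ} (W : Matrix (Fin m) (Fin k) ℝ), Pr * (Pr * W) = Pr * W := by
    intro k W; rw [← Matrix.mul_assoc, hPr2]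
  -- B and its square root
  set B : Matrix (Fin d) (Fin d) ℝ := X - U * S * Vᴴ with hBdef
  have hBB : Bᴴ * B = Xᴴ * X - V * (S * S) * Vᴴ := by
    rw [hBdef]
    simp only [conjTranspose_sub, Matrix.sub_mul, Matrix.mul_sub, conjTranspose_mul,
      conjTranspose_conjTranspose, hSh, Matrix.mul_assoc]
    rw [hXU' (S * Vᴴ), hUX, hU' (S * Vᴴ)]
    abel
  have hB : (Bᴴ * B).PosSemidef := Matrix.posSemidef_conjTranspose_mul_self B
  set SB : Matrix (Fin d) (Fin d) ℝ := CFC.sqrt (Bᴴ * B) with hSBdef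
  have hSBpsd : SB.PosSemidef := (CFC.sqrt_nonneg _).posSemidef
  have hSBh : SBᴴ = SB := hSBpsd.1
  have hSB2 : SB * SB = Bᴴ * B := by
    have := CFC.sq_sqrt (Bᴴ * B) hB.nonneg
    rwa [pow_two] at this
  have hSBV : SB * V = 0 := by
    have h0 : (SB * V)ᴴ * (SB * V) = 0 := by
      rw [conjTranspose_mul, hSBh, Matrix.mul_assoc Vᴴ SB (SB * V),
        ← Matrix.mul_assoc SB SB V, hSB2, hBB]
      simp only [Matrix.sub_mul, Matrix.mul_sub, Matrix.mul_assoc]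
      rw [hXV, hXU' S, hV, Matrix.mul_one]
      exact sub_self _
    exact Matrix.conjTranspose_mul_self_eq_zero.mp h0
  have hVSB : Vᴴ * SB = 0 := by
    have := congrArg conjTranspose hSBV
    rwa [conjTranspose_mul, hSBh, conjTranspose_zero] at this
  have hSBV' : ∀ {k : ℕ} (W : Matrix (Fin m) (Fin k) ℝ), SB * (V * W) = 0 := by
    intro k W; rw [← Matrix.mul_assoc, hSBV, Matrix.zero_mul]
  -- main trace formula
  have main : ∀ s : ℝ, (S + s • Pr).PosSemidef →
      nucNorm (X + s • Z) = S.trace + s * Pr.trace + SB.trace := by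
    intro s hs
    set Q : Matrix (Fin m) (Fin m) ℝ := S + s • Pr with hQdef
    set P : Matrix (Fin d) (Fin d) ℝ := V * Q * Vᴴ with hPdef
    have hRpsd : (P + SB).PosSemidef := (hs.mul_mul_conjTranspose_same V).add hSBpsd
    have hPSB : P * SB = 0 := by
      rw [hPdef, Matrix.mul_assoc (V * Q) Vᴴ SB, hVSB, Matrix.mul_zero]
    have hSBP : SB * P = 0 := by
      rw [hPdef, Matrix.mul_assoc V Q Vᴴ, hSBV' (Q * Vᴴ)]
    have hPP : P * P = V * (Q * (Q * Vᴴ)) := by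
      rw [hPdef]
      simp only [Matrix.mul_assoc]
      rw [hV' (Q * Vᴴ)]
    have hXZ : Xᴴ * Z = V * (S * (Pr * Vᴴ)) := by
      rw [hZdef]
      simp only [Matrix.mul_assoc]
      rw [hXU' (Pr * Vᴴ)]
    have hZh : Zᴴ = V * (Pr * Uᴴ) := by
      rw [hZdef]
      simp only [conjTranspose_mul, conjTranspose_conjTranspose, hPs, Matrix.mul_assoc]
    have hZX : Zᴴ * X = V * (Pr * (S * Vᴴ)) := by
      rw [hZh]
      simp only [Matrix.mul_assoc]
      rw [hUX]
    have hZZ : Zᴴ * Z = V * (Pr * Vᴴ) := by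
      rw [hZh, hZdef]
      simp only [Matrix.mul_assoc]
      rw [hU' (Pr * Vᴴ), hPr2' Vᴴ]
    have hR2 : (P + SB) ^ 2 = (X + s • Z)ᴴ * (X + s • Z) := by
      rw [pow_two, Matrix.add_mul, Matrix.mul_add, Matrix.mul_add, hPSB, hSBP, hPP, hSB2, hBB]
      have rhs : (X + s • Z)ᴴ * (X + s • Z)
          = Xᴴ * X + s • (Xᴴ * Z) + s • (Zᴴ * X) + (s * s) • (Zᴴ * Z) := by
        simp only [conjTranspose_add, conjTranspose_smul, star_trivial, Matrix.add_mul,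
          Matrix.mul_add, Matrix.smul_mul, Matrix.mul_smul, smul_add, smul_smul]
        abel
      rw [rhs, hXZ, hZX, hZZ, hQdef]
      simp only [Matrix.mul_add, Matrix.add_mul, Matrix.mul_smul, Matrix.smul_mul, smul_add,
        smul_smul, Matrix.mul_assoc, hPr2' Vᴴ]
      abel
    have hnn := nucNorm_eq_trace_of_sq (X + s • Z) (P + SB) hRpsd hR2
    rw [hnn, Matrix.trace_add]
    have hPtr : P.trace = S.trace + s * Pr.trace := by
      rw [hPdef, Matrix.trace_mul_cycle, hV, Matrix.one_mul, hQdef, Matrix.trace_add,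
        Matrix.trace_smul, smul_eq_mul]
    rw [hPtr]
  have h0 : (S + (0:ℝ) • Pr).PosSemidef := by
    simpa using Matrix.PosSemidef.diagonal hσ
  have m0 := main 0 h0
  simp only [zero_smul, add_zero, zero_mul] at m0
  have mt := main t hPSD
  rw [mt, m0]
  ring

lemma svd_data {d m : ℕ} (X : Matrix (Fin d) (Fin d) ℝ) (h : m ≤ X.rank) :
    ∃ (U V : Matrix (Fin d) (Fin m) ℝ) (σ : Fin m → ℝ),
      (∀ i, 0 < σ i) ∧ Vᴴ * V = 1 ∧ Uᴴ * U = 1 ∧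
      X * V = U * diagonal σ ∧ Xᴴ * U = V * diagonal σ := by
  have hH : (Xᴴ * X).IsHermitian := Matrix.isHermitian_conjTranspose_mul_self X
  have hPSD : (Xᴴ * X).PosSemidef := Matrix.posSemidef_conjTranspose_mul_self X
  set lam : Fin d → ℝ := hH.eigenvalues with hlam
  have hlam_nonneg : ∀ i, 0 ≤ lam i := fun i => hPSD.eigenvalues_nonneg i
  have hcard : m ≤ Fintype.card {i // lam i ≠ 0} := by
    have h1 : (Xᴴ * X).rank = Fintype.card {i // lam i ≠ 0} := hH.rank_eq_card_non_zero_eigs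
    have h2 : (Xᴴ * X).rank = X.rank := Matrix.rank_conjTranspose_mul_self X
    omega
  obtain ⟨e0⟩ : Nonempty (Fin m ↪ {i // lam i ≠ 0}) := by
    apply Function.Embedding.nonempty_of_card_le
    simpa using hcard
  set e : Fin m → Fin d := fun i => (e0 i).1 with he
  have he_inj : Function.Injective e := fun i j hij => e0.injective (Subtype.ext hij)
  have he_pos : ∀ i, 0 < lam (e i) := fun i =>
    lt_of_le_of_ne (hlam_nonneg _) (Ne.symm (e0 i).2)
  set W : Matrix (Fin d) (Fin d) ℝ := (hH.eigenvectorUnitary : Matrix (Fin d) (Fin d) ℝ)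
    with hW
  have hWW : Wᴴ * W = 1 := by
    rw [← Matrix.star_eq_conjTranspose]
    exact Unitary.coe_star_mul_self _
  have hspec : (Xᴴ * X) * W = W * diagonal lam := by
    have hco : (RCLike.ofReal ∘ hH.eigenvalues : Fin d → ℝ) = lam := by
      funext i; simp [hlam]
    have hsp := hH.spectral_theorem
    rw [hco, Unitary.conjStarAlgAut_apply, ← hW] at hsp
    rw [hsp, Matrix.mul_assoc (W * diagonal lam) (star W) W,
      show star W * W = (1 : Matrix (Fin d) (Fin d) ℝ) from Unitary.coe_star_mul_self _,
      Matrix.mul_one]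
  set V : Matrix (Fin d) (Fin m) ℝ := W.submatrix id e with hVdef
  have hVV : Vᴴ * V = 1 := by
    ext i j
    have h1 := congrFun (congrFun hWW (e i)) (e j)
    simp only [Matrix.mul_apply, Matrix.conjTranspose_apply, Matrix.one_apply] at h1 ⊢
    simp only [hVdef, Matrix.submatrix_apply, id_eq]
    rw [h1]
    simp [he_inj.eq_iff]
  have hHV : (Xᴴ * X) * V = V * diagonal (fun i => lam (e i)) := by
    ext i j
    have h1 := congrFun (congrFun hspec i) (e j)
    simp only [Matrix.mul_diagonal] at h1 ⊢
    simp only [Matrix.mul_apply] at h1 ⊢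
    simp only [hVdef, Matrix.submatrix_apply, id_eq]
    exact h1
  set σ : Fin m → ℝ := fun i => Real.sqrt (lam (e i)) with hσdef
  have hσpos : ∀ i, 0 < σ i := fun i => Real.sqrt_pos.mpr (he_pos i)
  have hσsq : ∀ i, σ i * σ i = lam (e i) := fun i => Real.mul_self_sqrt (hlam_nonneg _)
  have hσne : ∀ i, σ i ≠ 0 := fun i => ne_of_gt (hσpos i)
  set Dinv : Matrix (Fin m) (Fin m) ℝ := diagonal (fun i => (σ i)⁻¹) with hDinv
  set U : Matrix (Fin d) (Fin m) ℝ := X * V * Dinv with hUdef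
  have hinvmul : Dinv * diagonal σ = 1 := by
    rw [hDinv, Matrix.diagonal_mul_diagonal]
    rw [show (fun i => (σ i)⁻¹ * σ i) = fun _ => (1:ℝ) by
      funext i; exact inv_mul_cancel₀ (hσne i)]
    exact Matrix.diagonal_one
  have hXU : Xᴴ * U = V * diagonal σ := by
    rw [hUdef, ← Matrix.mul_assoc, ← Matrix.mul_assoc, hHV, Matrix.mul_assoc,
      Matrix.diagonal_mul_diagonal]
    have : (fun i => lam (e i) * (σ i)⁻¹) = σ := funext fun i => by
      rw [← hσsq i]; field_simp
    rw [this]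
  have hUU : Uᴴ * U = 1 := by
    have hUh : Uᴴ = Dinv * (Vᴴ * Xᴴ) := by
      rw [hUdef, Matrix.conjTranspose_mul, Matrix.conjTranspose_mul, hDinv,
        Matrix.diagonal_conjTranspose]
      simp [Matrix.mul_assoc]
    rw [hUh, Matrix.mul_assoc, Matrix.mul_assoc, hXU, ← Matrix.mul_assoc Vᴴ V,
      hVV, Matrix.one_mul, hinvmul]
  have hXVU : X * V = U * diagonal σ := by
    rw [hUdef, Matrix.mul_assoc, hinvmul, Matrix.mul_one]
  exact ⟨U, V, σ, hσpos, hVV, hUU, hXVU, hXU⟩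

lemma ortho_in_ker {k m r : ℕ} (T : Matrix (Fin k) (Fin m) ℝ) (h : T.rank + r ≤ m) :
    ∃ G : Matrix (Fin m) (Fin r) ℝ, Gᴴ * G = 1 ∧ T * G = 0 := by
  set eqv : EuclideanSpace ℝ (Fin m) ≃ₗ[ℝ] (Fin m → ℝ) :=
    WithLp.linearEquiv 2 ℝ (Fin m → ℝ) with heqv
  set L : EuclideanSpace ℝ (Fin m) →ₗ[ℝ] (Fin k → ℝ) :=
    T.mulVecLin ∘ₗ eqv.toLinearMap with hL
  have hrange : LinearMap.range L = LinearMap.range T.mulVecLin := by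
    rw [hL, LinearMap.range_comp, LinearEquiv.range, Submodule.map_top]
  have hdim : r ≤ Module.finrank ℝ (LinearMap.ker L) := by
    have h1 := LinearMap.finrank_range_add_finrank_ker L
    have h2 : Module.finrank ℝ (EuclideanSpace ℝ (Fin m)) = m := by
      simp [finrank_euclideanSpace]
    have h3 : Module.finrank ℝ (LinearMap.range L) = T.rank := by
      rw [hrange]; rfl
    omega
  set K := LinearMap.ker L with hK
  set b := stdOrthonormalBasis ℝ K with hb
  set G : Matrix (Fin m) (Fin r) ℝ :=
    fun i j => (((b (Fin.castLE hdim j)) : K) : EuclideanSpace ℝ (Fin m)) i with hG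
  refine ⟨G, ?_, ?_⟩
  · ext j j'
    have horth := b.orthonormal
    rw [orthonormal_iff_ite] at horth
    have h1 := horth (Fin.castLE hdim j) (Fin.castLE hdim j')
    rw [Submodule.coe_inner] at h1
    simp only [PiLp.inner_apply, RCLike.inner_apply, starRingEnd_apply, star_trivial] at h1
    simp only [Matrix.mul_apply, Matrix.conjTranspose_apply, star_trivial, Matrix.one_apply]
    simp only [hG]
    rw [Finset.sum_congr rfl fun x _ =>
      mul_comm (((b (Fin.castLE hdim j) : K) : EuclideanSpace ℝ (Fin m)).ofLp x) _, h1]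
    simp [Fin.castLE_inj]
  · ext i j
    have hmem := LinearMap.mem_ker.mp (b (Fin.castLE hdim j)).2
    have h2 := congrFun hmem i
    simp only [hL, LinearMap.comp_apply, Matrix.mulVecLin_apply, LinearEquiv.coe_coe,
      Matrix.mulVec, dotProduct, Pi.zero_apply] at h2
    simp only [Matrix.mul_apply, Matrix.zero_apply]
    simp only [hG]
    simpa [heqv] using h2

end StmtNineAux

/-- if `rank(X) ≥ 2r`, `rank(X⋆) ≤ r` and `r ≥ 1`, there is a matrix `Z̄`
with `rank(Z̄) = r`, `‖Z̄‖_F = √r`, `⟨Z̄, X⋆⟩ = 0`, `⟨Z̄, X⟩ > 0`, and `⟨Z̄, Z⟩ = r`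
for every subgradient `Z ∈ ∂‖X‖_*`. -/
theorem stmt9 {d : ℕ} (X Xstar : Matrix (Fin d) (Fin d) ℝ) (r : ℕ) (hr : 1 ≤ r)
    (hX : 2 * r ≤ X.rank) (hXstar : Xstar.rank ≤ r) :
    ∃ Zbar : Matrix (Fin d) (Fin d) ℝ,
      Zbar.rank = r ∧
      frob Zbar = Real.sqrt r ∧
      fip Zbar Xstar = 0 ∧
      0 < fip Zbar X ∧
      ∀ Z ∈ nucSubdiff X, fip Zbar Z = r := by
  classical
  open Matrix in
  obtain ⟨U, V, σ, hσpos, hVV, hUU, hXV, hXU⟩ := svd_data X hX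
  have hσnn : ∀ i, 0 ≤ σ i := fun i => (hσpos i).le
  -- choose G orthonormal in the kernel of Xstarᴴ * U
  set T : Matrix (Fin d) (Fin (2 * r)) ℝ := Xstarᴴ * U with hT
  have hTrank : T.rank + r ≤ 2 * r := by
    have h1 : T.rank ≤ Xstarᴴ.rank := Matrix.rank_mul_le_left _ _
    have h2 : Xstarᴴ.rank = Xstar.rank := Matrix.rank_conjTranspose _
    omega
  obtain ⟨G, hGG, hTG⟩ := ortho_in_ker T hTrank
  set Pr : Matrix (Fin (2 * r)) (Fin (2 * r)) ℝ := G * Gᴴ with hPrdef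
  have hPrh : Prᴴ = Pr := by
    rw [hPrdef, Matrix.conjTranspose_mul, Matrix.conjTranspose_conjTranspose]
  have hPr2 : Pr * Pr = Pr := by
    rw [hPrdef, Matrix.mul_assoc, ← Matrix.mul_assoc Gᴴ G Gᴴ, hGG, Matrix.one_mul]
  have hPrtr : Pr.trace = (r : ℝ) := by
    rw [hPrdef, Matrix.trace_mul_comm, hGG, Matrix.trace_one]
    simp
  -- rule forms
  have hUU' : ∀ {k : ℕ} (W : Matrix (Fin (2 * r)) (Fin k) ℝ), Uᴴ * (U * W) = W := by
    intro k W; rw [← Matrix.mul_assoc, hUU, Matrix.one_mul]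
  have hVV' : ∀ {k : ℕ} (W : Matrix (Fin (2 * r)) (Fin k) ℝ), Vᴴ * (V * W) = W := by
    intro k W; rw [← Matrix.mul_assoc, hVV, Matrix.one_mul]
  have hGG' : ∀ {k : ℕ} (W : Matrix (Fin r) (Fin k) ℝ), Gᴴ * (G * W) = W := by
    intro k W; rw [← Matrix.mul_assoc, hGG, Matrix.one_mul]
  have hDh : (diagonal σ)ᴴ = diagonal σ := by
    simp [Matrix.diagonal_conjTranspose]
  have hUX : Uᴴ * X = diagonal σ * Vᴴ := by
    have := congrArg Matrix.conjTranspose hXU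
    simpa only [Matrix.conjTranspose_mul, Matrix.conjTranspose_conjTranspose, hDh] using this
  -- the candidate matrix
  set Zbar : Matrix (Fin d) (Fin d) ℝ := U * Pr * Vᴴ with hZbar
  have hZbarH : Zbarᴴ = V * (Pr * Uᴴ) := by
    rw [hZbar]
    simp only [Matrix.conjTranspose_mul, Matrix.conjTranspose_conjTranspose, hPrh,
      Matrix.mul_assoc]
  -- minimum singular value
  have hne : (Finset.univ : Finset (Fin (2 * r))).Nonempty :=
    ⟨⟨0, by omega⟩, Finset.mem_univ _⟩
  set c : ℝ := Finset.univ.inf' hne σ with hc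
  have hc_le : ∀ i, c ≤ σ i := fun i => Finset.inf'_le σ (Finset.mem_univ i)
  have hc_pos : 0 < c := by
    rw [hc, Finset.lt_inf'_iff]
    exact fun i _ => hσpos i
  -- positive semidefiniteness of the two perturbations
  have hPrPSD : Pr.PosSemidef := by
    rw [hPrdef]
    exact Matrix.posSemidef_self_mul_conjTranspose G
  have hPSDp : (diagonal σ + c • Pr).PosSemidef :=
    (Matrix.PosSemidef.diagonal hσnn).add (psd_smul hPrPSD hc_pos.le)
  have hPSDm : (diagonal σ + (-c) • Pr).PosSemidef := by
    have h1P : (1 - Pr)ᴴ * (1 - Pr) = 1 - Pr := by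
      simp only [Matrix.conjTranspose_sub, Matrix.conjTranspose_one, hPrh, Matrix.sub_mul,
        Matrix.mul_sub, Matrix.mul_one, Matrix.one_mul, hPr2]
      abel
    have hPSD1P : (1 - Pr).PosSemidef := by
      have := Matrix.posSemidef_conjTranspose_mul_self (1 - Pr)
      rwa [h1P] at this
    have hdiagsub : diagonal (fun i => σ i - c) = diagonal σ - c • (1 : Matrix (Fin (2*r)) (Fin (2*r)) ℝ) := by
      ext i j
      by_cases hij : i = j <;>
        simp [Matrix.diagonal_apply, Matrix.sub_apply, Matrix.smul_apply, Matrix.one_apply, hij]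
    have heq : diagonal σ + (-c) • Pr = diagonal (fun i => σ i - c) + c • (1 - Pr) := by
      rw [hdiagsub, smul_sub, neg_smul]
      abel
    rw [heq]
    exact (Matrix.PosSemidef.diagonal fun i => by
      have := hc_le i; simp only [Pi.zero_apply]; linarith).add (psd_smul hPSD1P hc_pos.le)
  -- assemble
  refine ⟨Zbar, ?_, ?_, ?_, ?_, ?_⟩
  · -- rank
    have hZfact : Zbar = (U * G) * (V * G)ᴴ := by
      rw [hZbar, hPrdef, Matrix.conjTranspose_mul]
      simp only [Matrix.mul_assoc]
    have hUGo : (U * G)ᴴ * (U * G) = 1 := by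
      rw [Matrix.conjTranspose_mul, Matrix.mul_assoc, hUU' G, hGG]
    have hVGo : (V * G)ᴴ * (V * G) = 1 := by
      rw [Matrix.conjTranspose_mul, Matrix.mul_assoc, hVV' G, hGG]
    have hupper : Zbar.rank ≤ r := by
      calc Zbar.rank = ((U * G) * (V * G)ᴴ).rank := by rw [hZfact]
      _ ≤ (U * G).rank := Matrix.rank_mul_le_left _ _
      _ ≤ Fintype.card (Fin r) := Matrix.rank_le_card_width _
      _ = r := Fintype.card_fin r
    have hone : (U * G)ᴴ * (Zbar * (V * G)) = 1 := by
      rw [hZfact, Matrix.mul_assoc (U * G) (V * G)ᴴ (V * G), hVGo, Matrix.mul_one, hUGo]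
    have hlower : r ≤ Zbar.rank := by
      calc r = Fintype.card (Fin r) := (Fintype.card_fin r).symm
      _ = (1 : Matrix (Fin r) (Fin r) ℝ).rank := Matrix.rank_one.symm
      _ = ((U * G)ᴴ * (Zbar * (V * G))).rank := by rw [hone]
      _ ≤ (Zbar * (V * G)).rank := Matrix.rank_mul_le_right _ _
      _ ≤ Zbar.rank := Matrix.rank_mul_le_left _ _
    omega
  · -- Frobenius norm
    have hZZ : Zbarᴴ * Zbar = V * (Pr * Vᴴ) := by
      rw [hZbarH, hZbar]
      simp only [Matrix.mul_assoc]
      rw [hUU' (Pr * Vᴴ), ← Matrix.mul_assoc Pr Pr Vᴴ, hPr2]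
    have hsum : (∑ i, ∑ j, Zbar i j ^ 2) = (Zbarᴴ * Zbar).trace := by
      simp only [Matrix.trace, Matrix.diag, Matrix.mul_apply, Matrix.conjTranspose_apply,
        star_trivial, pow_two]
      rw [Finset.sum_comm]
    have htr : (Zbarᴴ * Zbar).trace = (r : ℝ) := by
      rw [hZZ, Matrix.trace_mul_comm, Matrix.mul_assoc, hVV, Matrix.mul_one, hPrtr]
    rw [frob, hsum, htr]
  · -- orthogonal to Xstar
    rw [fip_eq_trace, hZbarH]
    have hUXstar : Uᴴ * Xstar = Tᴴ := by
      rw [hT, Matrix.conjTranspose_mul, Matrix.conjTranspose_conjTranspose]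
    have : V * (Pr * Uᴴ) * Xstar = 0 := by
      rw [Matrix.mul_assoc, Matrix.mul_assoc, hUXstar, hPrdef, Matrix.mul_assoc,
        show Gᴴ * Tᴴ = 0 by rw [← Matrix.conjTranspose_mul, hTG, Matrix.conjTranspose_zero]]
      simp
    rw [this, Matrix.trace_zero]
  · -- positive inner product with X
    rw [fip_eq_trace, hZbarH]
    have h1 : V * (Pr * Uᴴ) * X = V * (Pr * (diagonal σ * Vᴴ)) := by
      simp only [Matrix.mul_assoc]
      rw [hUX]
    rw [h1, Matrix.trace_mul_comm, ← Matrix.mul_assoc, Matrix.mul_assoc Pr (diagonal σ) Vᴴ,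
      Matrix.mul_assoc Pr (diagonal σ * Vᴴ) V, Matrix.mul_assoc (diagonal σ) Vᴴ V, hVV,
      Matrix.mul_one]
    have hdiag : (Pr * diagonal σ).trace = ∑ i, Pr i i * σ i := by
      simp [Matrix.trace, Matrix.diag, Matrix.mul_diagonal]
    have hPrd : ∀ i, 0 ≤ Pr i i := by
      intro i
      rw [hPrdef]
      simp only [Matrix.mul_apply, Matrix.conjTranspose_apply, star_trivial]
      exact Finset.sum_nonneg fun j _ => mul_self_nonneg _
    have hlow : (r : ℝ) * c ≤ ∑ i, Pr i i * σ i := by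
      have h2 : (r : ℝ) * c = ∑ i, Pr i i * c := by
        rw [← Finset.sum_mul]
        congr 1
        have : (∑ i, Pr i i) = Pr.trace := rfl
        rw [this, hPrtr]
      rw [h2]
      exact Finset.sum_le_sum fun i _ => mul_le_mul_of_nonneg_left (hc_le i) (hPrd i)
    have hrpos : (0 : ℝ) < (r : ℝ) * c := by
      apply mul_pos _ hc_pos
      exact_mod_cast Nat.lt_of_lt_of_le Nat.zero_lt_one hr
    rw [hdiag]
    linarith
  · -- subgradient property
    intro Z hZ
    have hZ' : ∀ Y, nucNorm X + fip Z (Y - X) ≤ nucNorm Y := hZ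
    have hkeyp := key X U V σ Pr hσnn hVV hUU hXV hXU hPrh hPr2 c hPSDp
    have hkeym := key X U V σ Pr hσnn hVV hUU hXV hXU hPrh hPr2 (-c) hPSDm
    rw [hPrtr] at hkeyp hkeym
    have h1 := hZ' (X + c • Zbar)
    rw [add_sub_cancel_left, fip_smul, hkeyp] at h1
    have h2 := hZ' (X + (-c) • Zbar)
    rw [add_sub_cancel_left, fip_smul, hkeym] at h2
    have hle : fip Z Zbar ≤ r := by
      have := (add_le_add_iff_left (nucNorm X)).mp h1
      exact le_of_mul_le_mul_left (by linarith) hc_pos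
    have hge : (r : ℝ) ≤ fip Z Zbar := by
      have := (add_le_add_iff_left (nucNorm X)).mp h2
      nlinarith
    rw [fip_comm]
    linarith
end
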